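/- (Generalized Saito's criterion) Let (A, m) be a multiarrangement with |m| = ∑ m(H_i). If δ_1, ..., δ_l ∈ D(A, m) satisfy det(δ_i(x_j)) = c·Q(A, m) for some nonzero constant c ∈ K, then δ_1, ..., δ_l form a free S-basis of D(A, m). -/

import Mathlib

noncomputable section

variable {K : Type*} [Field K] {l n : ℕ}

/-- The linear form with coefficient vector `a`. -/
def lin (a : Fin l → K) : MvPolynomial (Fin l) K :=
  ∑ j, MvPolynomial.C (a j) * MvPolynomial.X j

/-- The polynomial vector field `δ = ∑_j f_j ∂_{x_j}` (given by its coefficient vector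
`f`) applied to a polynomial `g`. -/
def derApp (f : Fin l → MvPolynomial (Fin l) K) (g : MvPolynomial (Fin l) K) :
    MvPolynomial (Fin l) K :=
  ∑ j, f j * MvPolynomial.pderiv j g

/-- The vector field with coefficient vector `f` is logarithmic for the central
arrangement with defining linear forms `α_k`: `δ(α_k) ∈ (α_k) S` for all `k`. -/
def IsLogDer (α : Fin n → Fin l → K) (f : Fin l → MvPolynomial (Fin l) K) : Prop :=
  ∀ k, lin (α k) ∣ derApp f (lin (α k))

/-- The `α_k` are the defining forms of a central arrangement of `n` distinct
hyperplanes in `K^l`: they are nonzero and pairwise non-proportional. -/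
def IsArrangement (α : Fin n → Fin l → K) : Prop :=
  (∀ k, α k ≠ 0) ∧ ∀ k k', k ≠ k' → ∀ c : K, α k' ≠ c • α k
/-- The vector field with coefficient vector `f` is logarithmic for the multiarrangement
`(A, m)`: `δ(α_k) ∈ (α_k)^{m k} S` for all `k`. -/
def IsMultiLogDer (α : Fin n → Fin l → K) (m : Fin n → ℕ)
    (f : Fin l → MvPolynomial (Fin l) K) : Prop :=
  ∀ k, lin (α k) ^ m k ∣ derApp f (lin (α k))

namespace SaitoAux

open MvPolynomial Matrix

lemma lin_eval (a x : Fin l → K) : eval x (lin a) = ∑ j, a j * x j := by simp [lin]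

lemma lin_eval_single (a : Fin l → K) (j : Fin l) (v : K) :
    eval (Pi.single j v) (lin a) = a j * v := by
  simp [lin_eval, Pi.single_apply, mul_ite, Finset.sum_ite_eq']

lemma lin_ne_zero {a : Fin l → K} (ha : a ≠ 0) : lin a ≠ 0 := by
  obtain ⟨j, hj⟩ := Function.ne_iff.mp ha
  intro h
  have := congrArg (eval (Pi.single j (1:K))) h
  simp [lin_eval_single] at this
  exact hj this

lemma pderiv_lin (i : Fin l) (a : Fin l → K) : pderiv i (lin a) = C (a i) := by
  simp [lin, pderiv_X, Pi.single_apply]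

lemma derApp_lin (f : Fin l → MvPolynomial (Fin l) K) (a : Fin l → K) :
    derApp f (lin a) = ∑ j, f j * C (a j) := by
  simp [derApp, pderiv_lin]

def uVec (a : Fin l → K) (j0 : Fin l) : Fin l → MvPolynomial (Fin l) K := fun j =>
  if j = j0 then
    C (a j0)⁻¹ * (X j0 - ∑ j' ∈ Finset.univ.erase j0, C (a j') * X j')
  else X j

def wVec (a : Fin l → K) (j0 : Fin l) : Fin l → MvPolynomial (Fin l) K := fun j =>
  if j = j0 then lin a else X j

lemma lin_split (a : Fin l → K) (j0 : Fin l) :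
    lin a = C (a j0) * X j0 + ∑ j' ∈ Finset.univ.erase j0, C (a j') * X j' := by
  rw [lin, ← Finset.add_sum_erase _ _ (Finset.mem_univ j0)]

lemma aeval_w_u (a : Fin l → K) (j0 : Fin l) (ha : a j0 ≠ 0) (j : Fin l) :
    aeval (wVec a j0) (uVec a j0 j) = X j := by
  by_cases h : j = j0
  · subst h
    rw [show uVec a j j = C (a j)⁻¹ * (X j - ∑ j' ∈ Finset.univ.erase j, C (a j') * X j')
      from if_pos rfl]
    simp only [_root_.map_mul, map_sub, map_sum, aeval_X, aeval_C, MvPolynomial.algebraMap_eq]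
    have hs : ∑ j' ∈ Finset.univ.erase j, C (a j') * wVec a j j'
        = ∑ j' ∈ Finset.univ.erase j, C (a j') * X j' := by
      refine Finset.sum_congr rfl fun j' hj' => ?_
      rw [wVec, if_neg (Finset.ne_of_mem_erase hj')]
    rw [hs, show wVec a j j = lin a from if_pos rfl, lin_split a j]
    rw [add_sub_cancel_right, ← mul_assoc, ← _root_.map_mul, inv_mul_cancel₀ ha, _root_.map_one, one_mul]
  · simp [uVec, wVec, if_neg h]

lemma aeval_u_w (a : Fin l → K) (j0 : Fin l) (ha : a j0 ≠ 0) (j : Fin l) :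
    aeval (uVec a j0) (wVec a j0 j) = X j := by
  by_cases h : j = j0
  · subst h
    rw [wVec, if_pos rfl, lin_split a j]
    simp only [map_add, _root_.map_mul, map_sum, aeval_X, aeval_C, MvPolynomial.algebraMap_eq]
    have hs : ∑ j' ∈ Finset.univ.erase j, C (a j') * uVec a j j'
        = ∑ j' ∈ Finset.univ.erase j, C (a j') * X j' := by
      refine Finset.sum_congr rfl fun j' hj' => ?_
      rw [uVec, if_neg (Finset.ne_of_mem_erase hj')]
    rw [hs, show uVec a j j = _ from if_pos rfl, ← mul_assoc, ← _root_.map_mul, mul_inv_cancel₀ ha,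
      _root_.map_one, one_mul, sub_add_cancel]
  · simp [uVec, wVec, if_neg h]

def linEquiv (a : Fin l → K) (j0 : Fin l) (ha : a j0 ≠ 0) :
    MvPolynomial (Fin l) K ≃ₐ[K] MvPolynomial (Fin l) K :=
  AlgEquiv.ofAlgHom (aeval (wVec a j0)) (aeval (uVec a j0))
    (MvPolynomial.algHom_ext fun j => by
      simpa using aeval_w_u a j0 ha j)
    (MvPolynomial.algHom_ext fun j => by
      simpa using aeval_u_w a j0 ha j)

lemma linEquiv_X (a : Fin l → K) (j0 : Fin l) (ha : a j0 ≠ 0) :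
    linEquiv a j0 ha (X j0) = lin a := by
  simp [linEquiv, wVec]

lemma prime_X_mv (i : Fin l) : Prime (X i : MvPolynomial (Fin l) K) := by
  cases l with
  | zero => exact i.elim0
  | succ l' =>
    have h0 : Prime (X (0:Fin (l'+1)) : MvPolynomial (Fin (l'+1)) K) := by
      rw [← MulEquiv.prime_iff (p := (X 0 : MvPolynomial (Fin (l'+1)) K))
        (MvPolynomial.finSuccEquiv K l').toRingEquiv.toMulEquiv]
      have h2 : (MvPolynomial.finSuccEquiv K l').toRingEquiv.toMulEquiv
          (X 0 : MvPolynomial (Fin (l'+1)) K) = Polynomial.X := by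
        simp [MvPolynomial.finSuccEquiv_X_zero]
      rw [h2]
      exact Polynomial.prime_X (R := MvPolynomial (Fin l') K)
    have := (MulEquiv.prime_iff (MvPolynomial.renameEquiv K
      (Equiv.swap (0 : Fin (l'+1)) i)).toRingEquiv.toMulEquiv).mpr h0
    simpa [Equiv.swap_apply_left] using this

lemma prime_lin {a : Fin l → K} (ha : a ≠ 0) : Prime (lin a) := by
  obtain ⟨j0, hj0⟩ := Function.ne_iff.mp ha
  have hj0 : a j0 ≠ 0 := hj0
  have := (MulEquiv.prime_iff (linEquiv a j0 hj0).toRingEquiv.toMulEquiv).mpr (prime_X_mv j0)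
  simpa [linEquiv_X] using this

lemma lin_not_dvd {a b : Fin l → K} (ha : a ≠ 0) (hb : ∀ t : K, b ≠ t • a) :
    ¬ lin a ∣ lin b := by
  rintro ⟨q, hq⟩
  obtain ⟨j0, hj0⟩ := Function.ne_iff.mp ha
  have hj0 : a j0 ≠ 0 := hj0
  set t := b j0 * (a j0)⁻¹ with ht
  apply hb t
  funext j
  show b j = t * a j
  by_cases h : j = j0
  · subst h; rw [ht]; field_simp
  · set x : Fin l → K := Pi.single j 1 + Pi.single j0 (-(a j * (a j0)⁻¹)) with hx
    have hevals : ∀ cvec : Fin l → K,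
        eval x (lin cvec) = cvec j + cvec j0 * (-(a j * (a j0)⁻¹)) := by
      intro cvec
      rw [lin_eval, hx]
      simp only [Pi.add_apply, mul_add]
      rw [Finset.sum_add_distrib]
      congr 1
      · simp [Pi.single_apply, mul_ite, Finset.sum_ite_eq']
      · simp [Pi.single_apply, mul_ite, Finset.sum_ite_eq']
    have hax : eval x (lin a) = 0 := by
      rw [hevals]; field_simp; ring
    have hbx : eval x (lin b) = 0 := by
      rw [hq, _root_.map_mul, hax, zero_mul]
    rw [hevals] at hbx
    have : b j = b j0 * (a j * (a j0)⁻¹) := by linear_combination hbx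
    rw [this, ht]; ring

/-- If each row `θ i` satisfies `lin a ^ M ∣ derApp (θ i) (lin a)`, then
`lin a ^ M` divides the determinant. -/
lemma pow_dvd_det {θ : Fin l → Fin l → MvPolynomial (Fin l) K} {a : Fin l → K}
    (ha : a ≠ 0) (M : ℕ) (h : ∀ i, lin a ^ M ∣ derApp (θ i) (lin a)) :
    lin a ^ M ∣ (Matrix.of θ).det := by
  obtain ⟨j0, hj0⟩ := Function.ne_iff.mp ha
  have hj0 : a j0 ≠ 0 := hj0
  set A := (Matrix.of θ)ᵀ with hA
  choose q hq using h
  have hrow : (∑ k, (C (a k) : MvPolynomial (Fin l) K) • A k)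
      = fun i => derApp (θ i) (lin a) := by
    funext i
    rw [Finset.sum_apply, derApp_lin]
    refine Finset.sum_congr rfl fun k _ => ?_
    simp [hA, mul_comm]
  have key := Matrix.det_updateRow_sum A j0 (fun k => (C (a k) : MvPolynomial (Fin l) K))
  rw [hrow] at key
  have hfn : (fun i => derApp (θ i) (lin a)) = (lin a ^ M) • q := by
    funext i; simpa using hq i
  rw [hfn, Matrix.det_updateRow_smul] at key
  have hdvd : lin a ^ M ∣ C (a j0) * A.det := by
    rw [smul_eq_mul] at key
    exact ⟨(A.updateRow j0 q).det, key.symm⟩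
  have hu : IsUnit (C (a j0) : MvPolynomial (Fin l) K) :=
    (isUnit_iff_ne_zero.mpr hj0).map (C : K →+* MvPolynomial (Fin l) K)
  have h2 := hu.dvd_mul_left.mp hdvd
  rwa [hA, Matrix.det_transpose] at h2

/-- Combine pairwise non-associate prime powers. -/
lemma prod_pow_dvd {R : Type*} [CommRing R] [IsDomain R] (s : Finset (Fin n))
    (p : Fin n → R) (m : Fin n → ℕ) (z : R)
    (hp : ∀ k, Prime (p k)) (hnd : ∀ k k', k ≠ k' → ¬ p k ∣ p k')
    (h : ∀ k ∈ s, p k ^ m k ∣ z) : (∏ k ∈ s, p k ^ m k) ∣ z := by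
  classical
  induction s using Finset.induction_on generalizing z with
  | empty => simp
  | @insert k s hk ih =>
    obtain ⟨w, hw⟩ := h k (Finset.mem_insert_self k s)
    have hw' : ∀ k' ∈ s, p k' ^ m k' ∣ w := by
      intro k' hk'
      have hne : k' ≠ k := fun he => hk (he ▸ hk')
      have hnd' : ¬ p k' ∣ p k ^ m k := fun hd =>
        hnd k' k hne ((hp k').dvd_of_dvd_pow hd)
      exact (hp k').pow_dvd_of_dvd_mul_left (m k') hnd'
        (hw ▸ h k' (Finset.mem_insert_of_mem hk'))
    rw [Finset.prod_insert hk, hw]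
    exact mul_dvd_mul_left _ (ih w hw')

lemma prod_dvd_det (α : Fin n → Fin l → K) (hα : IsArrangement α) (m : Fin n → ℕ)
    (θ : Fin l → Fin l → MvPolynomial (Fin l) K) (hθ : ∀ i, IsMultiLogDer α m (θ i)) :
    (∏ k, lin (α k) ^ m k) ∣ (Matrix.of θ).det :=
  prod_pow_dvd Finset.univ _ m _ (fun k => prime_lin (hα.1 k))
    (fun k k' hkk => lin_not_dvd (hα.1 k) (fun t => hα.2 k k' hkk t))
    (fun k _ => pow_dvd_det (hα.1 k) (m k) (fun i => hθ i k))

lemma det_updateRow_zero {R : Type*} [CommRing R] (A : Matrix (Fin l) (Fin l) R)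
    (i : Fin l) : (A.updateRow i (0 : Fin l → R)).det = 0 := by
  have := Matrix.det_updateRow_smul A i (0 : R) 0
  simpa using this

lemma det_updateRow_finset_sum {R : Type*} [CommRing R] {ι : Type*} [DecidableEq ι]
    (A : Matrix (Fin l) (Fin l) R) (i : Fin l) (t : Finset ι) (v : ι → Fin l → R) :
    (A.updateRow i (∑ j ∈ t, v j)).det = ∑ j ∈ t, (A.updateRow i (v j)).det := by
  classical
  induction t using Finset.induction_on with
  | empty => simpa using det_updateRow_zero A i
  | @insert k s hk ih =>
    rw [Finset.sum_insert hk, Matrix.det_updateRow_add, ih, Finset.sum_insert hk]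

lemma det_updateRow_eq_sum {R : Type*} [CommRing R] (A : Matrix (Fin l) (Fin l) R)
    (i : Fin l) (f : Fin l → R) :
    (A.updateRow i f).det = ∑ j, f j * (A.updateRow i (Pi.single j 1)).det := by
  have hf : f = ∑ j, Pi.single j (f j) := (Finset.univ_sum_single f).symm
  conv_lhs => rw [hf]
  rw [det_updateRow_finset_sum]
  refine Finset.sum_congr rfl fun j _ => ?_
  have hsingle : Pi.single j (f j) = f j • (Pi.single j 1 : Fin l → R) := by
    funext x
    simp [Pi.single_apply, mul_ite]
  rw [hsingle, Matrix.det_updateRow_smul]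

lemma vecMul_adjugate_apply {R : Type*} [CommRing R] (D : Matrix (Fin l) (Fin l) R)
    (f : Fin l → R) (i : Fin l) :
    (f ᵥ* D.adjugate) i = (D.updateRow i f).det := by
  rw [det_updateRow_eq_sum]
  simp only [Matrix.vecMul, dotProduct, Matrix.adjugate_apply]

lemma vecMul_smul_one {R : Type*} [CommRing R] (d : R) (v : Fin l → R) :
    v ᵥ* (d • (1 : Matrix (Fin l) (Fin l) R)) = d • v := by
  funext j
  simp [Matrix.vecMul, dotProduct, Matrix.one_apply, mul_ite,
    Finset.sum_ite_eq', mul_comm]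

end SaitoAux

open SaitoAux Matrix in
/-- Generalized Saito's criterion: if `δ_1, …, δ_l ∈ D(A, m)` satisfy
`det(δ_i(x_j)) = c · Q(A, m)` for a nonzero constant `c ∈ K`, then they form a free
`S`-basis of `D(A, m)`. -/
theorem multi_saito_criterion (α : Fin n → Fin l → K) (hα : IsArrangement α)
    (m : Fin n → ℕ)
    (δ : Fin l → Fin l → MvPolynomial (Fin l) K) (hδ : ∀ i, IsMultiLogDer α m (δ i))
    (c : K) (hc : c ≠ 0)
    (hdet : (Matrix.of δ).det = MvPolynomial.C c * ∏ k, lin (α k) ^ m k) :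
    ∀ f : Fin l → MvPolynomial (Fin l) K, IsMultiLogDer α m f →
      ∃! g : Fin l → MvPolynomial (Fin l) K, f = fun j => ∑ i, g i * δ i j := by
  intro f hf
  classical
  set D : Matrix (Fin l) (Fin l) (MvPolynomial (Fin l) K) := Matrix.of δ with hD
  have hCc : (MvPolynomial.C c : MvPolynomial (Fin l) K) ≠ 0 := by
    simpa using hc
  have hd0 : D.det ≠ 0 := by
    rw [hdet]
    exact mul_ne_zero hCc (Finset.prod_ne_zero_iff.mpr fun k _ =>
      pow_ne_zero _ (lin_ne_zero (hα.1 k)))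
  have hdvd : ∀ i, D.det ∣ (D.updateRow i f).det := by
    intro i
    have hrowlog : ∀ i', IsMultiLogDer α m ((D.updateRow i f) i') := by
      intro i'
      by_cases h : i' = i
      · subst h; rw [Matrix.updateRow_self]; exact hf
      · rw [Matrix.updateRow_ne h]; exact hδ i'
    have h1 : (∏ k, lin (α k) ^ m k) ∣ (D.updateRow i f).det :=
      prod_dvd_det α hα m (fun i' j => (D.updateRow i f) i' j) hrowlog
    obtain ⟨w, hw⟩ := h1
    refine ⟨MvPolynomial.C c⁻¹ * w, ?_⟩
    rw [hw, hdet]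
    rw [show MvPolynomial.C c * (∏ k, lin (α k) ^ m k) * (MvPolynomial.C c⁻¹ * w)
        = (MvPolynomial.C c * MvPolynomial.C c⁻¹) * ((∏ k, lin (α k) ^ m k) * w) from by
      ring, ← _root_.map_mul, mul_inv_cancel₀ hc, _root_.map_one, one_mul]
  choose g hg using hdvd
  have hcram : f ᵥ* D.adjugate = fun i => D.det * g i := by
    funext i; rw [vecMul_adjugate_apply, hg i]
  have hmain : (D.det • g) ᵥ* D = D.det • f := by
    have h2 : (D.det • g) = f ᵥ* D.adjugate := by
      rw [hcram]; funext i; simp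
    rw [h2, Matrix.vecMul_vecMul, Matrix.adjugate_mul, vecMul_smul_one]
  rw [Matrix.smul_vecMul] at hmain
  have hgD : g ᵥ* D = f := by
    funext j
    have := congrFun hmain j
    simp only [Pi.smul_apply, smul_eq_mul] at this
    exact mul_left_cancel₀ hd0 this
  have hvm : ∀ h : Fin l → MvPolynomial (Fin l) K,
      (fun j => ∑ i, h i * δ i j) = h ᵥ* D := by
    intro h
    funext j
    simp [hD, Matrix.vecMul, dotProduct]
  refine ⟨g, ?_, ?_⟩
  · show f = fun j => ∑ i, g i * δ i j
    rw [hvm g, hgD]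
  · intro g' hg'
    replace hg' : f = fun j => ∑ i, g' i * δ i j := hg'
    have hg'D : g' ᵥ* D = f := by rw [← hvm g', ← hg']
    have hsub : (g' - g) ᵥ* D = 0 := by
      rw [Matrix.sub_vecMul, hgD, hg'D, sub_self]
    have h0 : D.det • (g' - g) = 0 := by
      have := congrArg (· ᵥ* D.adjugate) hsub
      simpa [Matrix.vecMul_vecMul, Matrix.mul_adjugate, vecMul_smul_one,
        Matrix.zero_vecMul] using this
    funext i
    have := congrFun h0 i
    simp only [Pi.smul_apply, smul_eq_mul, Pi.zero_apply, Pi.sub_apply] at this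
    have h3 := (mul_eq_zero.mp this).resolve_left hd0
    exact (sub_eq_zero.mp h3)

end
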